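/- For all α, z ∈ ℂ \ {0}, the sequences {f_n(z)}_{n∈ℤ} and {g_n(z)}_{n∈ℤ} both satisfy the second-order difference equation v_{n−1} + (α q^{−n} − z − z^{−1}) v_n + v_{n+1} = 0 for every n ∈ ℤ. -/

import Mathlib

open Complex Filter Topology

/-- Finite q-Pochhammer symbol `(a;q)_n`. -/
noncomputable def qp (q a : ℂ) (n : ℕ) : ℂ := ∏ k ∈ Finset.range n, (1 - a * q ^ k)

/-- Infinite q-Pochhammer symbol `(a;q)_∞`. -/
noncomputable def qpInf (q a : ℂ) : ℂ := ∏' k : ℕ, (1 - a * q ^ k)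

/-- Theta function `θ_q(x) = (x;q)_∞ (q/x;q)_∞`. -/
noncomputable def theta (q x : ℂ) : ℂ := qpInf q x * qpInf q (q / x)

/-- Regularized confluent basic hypergeometric series `₁φ̃₁(0;b;q,w)`. -/
noncomputable def phiT (q b w : ℂ) : ℂ :=
  ∑' k : ℕ, qpInf q (b * q ^ k) * (-1) ^ k * q ^ (k * (k - 1) / 2) * w ^ k / qp q q k

/-- The solution `f_n(z)`. -/
noncomputable def fseq (q α z : ℂ) (n : ℤ) : ℂ :=
  (-1) ^ n * α ^ (-n) * q ^ (n * (n + 1) / 2) *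
    phiT q (q ^ (n + 1) / (α * z)) (z * q ^ (n + 1) / α)

/-- The solution `g_n(z)`. -/
noncomputable def gseq (q α z : ℂ) (n : ℤ) : ℂ :=
  z ^ (-n) * phiT q (α * z * q ^ (1 - n)) (q * z ^ 2)

section
variable {q : ℝ} (hq0 : 0 < q) (hq1 : q < 1)
include hq0 hq1

lemma mult_aux (a : ℂ) : Multipliable (fun k : ℕ => 1 - a * (q:ℂ)^k) := by
  by_cases h : ∃ k : ℕ, 1 - a * (q:ℂ)^k = 0
  · obtain ⟨k0, hk0⟩ := h
    refine ⟨0, ?_⟩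
    refine Tendsto.congr' ?_ tendsto_const_nhds
    filter_upwards [Filter.eventually_ge_atTop {k0}] with s hs
    exact (Finset.prod_eq_zero (hs (Finset.mem_singleton_self k0)) hk0).symm
  · push_neg at h
    -- use log criterion
    obtain ⟨K, hK⟩ : ∃ K : ℕ, ‖a‖ * q ^ K ≤ 1/2 := by
      rcases eq_or_ne a 0 with rfl | ha
      · exact ⟨0, by norm_num⟩
      · have : Tendsto (fun k : ℕ => ‖a‖ * q ^ k) atTop (𝓝 0) := by
          simpa using (tendsto_pow_atTop_nhds_zero_of_lt_one hq0.le hq1).const_mul ‖a‖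
        exact ((this.eventually_le_const (by norm_num : (0:ℝ) < 1/2)).exists)
    have hs : Summable fun k : ℕ => Complex.log (1 - a * (q:ℂ)^k) := by
      rw [← summable_nat_add_iff K]
      apply Summable.of_norm_bounded (g := fun k : ℕ => 3/2 * (‖a‖ * q ^ K) * q ^ k)
      · exact (summable_geometric_of_lt_one hq0.le hq1).mul_left _
      · intro k
        have hb : ‖-(a * (q:ℂ)^(k+K))‖ ≤ 1/2 := by
          rw [norm_neg, norm_mul]
          calc ‖a‖ * ‖(q:ℂ)^(k+K)‖ = ‖a‖ * q ^ (k+K) := by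
                rw [norm_pow, Complex.norm_real, Real.norm_of_nonneg hq0.le]
            _ ≤ ‖a‖ * q ^ K := by
                apply mul_le_mul_of_nonneg_left _ (norm_nonneg a)
                exact pow_le_pow_of_le_one hq0.le hq1.le (by omega)
            _ ≤ 1/2 := hK
        have := Complex.norm_log_one_add_half_le_self hb
        rw [show (1 : ℂ) + -(a * (q:ℂ)^(k+K)) = 1 - a * (q:ℂ)^(k+K) by ring] at this
        refine this.trans ?_
        rw [norm_neg, norm_mul, norm_pow, Complex.norm_real, Real.norm_of_nonneg hq0.le,
          pow_add]
        ring_nf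
        nlinarith [norm_nonneg a, pow_nonneg hq0.le k, pow_nonneg hq0.le K,
          pow_pos hq0 k, pow_pos hq0 K]
    have := Complex.multipliable_of_summable_log hs
    exact this
end

section
variable {q : ℝ} (hq0 : 0 < q) (hq1 : q < 1)
include hq0 hq1

lemma qpInf_peel (a : ℂ) : qpInf q a = (1 - a) * qpInf q (a * q) := by
  have h : Multipliable (fun n : ℕ => 1 - a * (q:ℂ)^(n+1)) := by
    have := mult_aux hq0 hq1 (a * q)
    apply this.congr
    intro n; rw [pow_succ]; ring
  have := tprod_eq_zero_mul' (f := fun k : ℕ => 1 - a * (q:ℂ)^k) (by simpa using h)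
  rw [qpInf, this]
  simp only [pow_zero, mul_one]
  congr 1
  rw [qpInf]
  exact tprod_congr fun n => by rw [pow_succ]; ring

lemma qpInf_shift (b : ℂ) (j : ℕ) :
    qpInf ((q:ℝ):ℂ) (b * (q:ℂ)^j) = (1 - b * (q:ℂ)^j) * qpInf (q:ℂ) (b * (q:ℂ)^(j+1)) := by
  have := qpInf_peel hq0 hq1 (b * (q:ℂ)^j)
  rw [this, pow_succ, ← mul_assoc]

lemma qpInf_norm_le (a : ℂ) : ‖qpInf (q:ℂ) a‖ ≤ Real.exp (‖a‖ / (1 - q)) := by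
  have hm := mult_aux hq0 hq1 a
  rw [qpInf, hm.norm_tprod]
  refine le_of_tendsto' hm.norm.hasProd ?_
  intro s
  calc ∏ i ∈ s, ‖1 - a * (q:ℂ)^i‖ ≤ ∏ i ∈ s, Real.exp (‖a‖ * q ^ i) := by
        apply Finset.prod_le_prod (fun i _ => norm_nonneg _)
        intro i _
        calc ‖1 - a * (q:ℂ)^i‖ ≤ ‖(1:ℂ)‖ + ‖a * (q:ℂ)^i‖ := norm_sub_le _ _
          _ = 1 + ‖a‖ * q ^ i := by
              rw [norm_one, norm_mul, norm_pow, Complex.norm_real,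
                Real.norm_of_nonneg hq0.le]
          _ ≤ Real.exp (‖a‖ * q ^ i) := by
              have := Real.add_one_le_exp (‖a‖ * q ^ i); linarith
    _ = Real.exp (∑ i ∈ s, ‖a‖ * q ^ i) := by rw [Real.exp_sum]
    _ ≤ Real.exp (‖a‖ / (1 - q)) := by
        apply Real.exp_le_exp.mpr
        have hsum : Summable (fun i : ℕ => ‖a‖ * q ^ i) :=
          (summable_geometric_of_lt_one hq0.le hq1).mul_left _
        refine (Summable.sum_le_tsum s (fun i _ => by positivity) hsum).trans ?_
        rw [tsum_mul_left, tsum_geometric_of_lt_one hq0.le hq1]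
        rw [div_eq_mul_inv]

omit hq0 hq1 in
lemma qp_q_eq (k : ℕ) : qp (q:ℂ) (q:ℂ) k = ((∏ j ∈ Finset.range k, (1 - q * q ^ j) : ℝ) : ℂ) := by
  rw [qp]; push_cast; ring_nf

lemma qp_q_ne (k : ℕ) : qp (q:ℂ) (q:ℂ) k ≠ 0 := by
  rw [qp_q_eq]
  intro h
  rw [Complex.ofReal_eq_zero] at h
  have hpos : ∀ j ∈ Finset.range k, (0:ℝ) < 1 - q * q ^ j := by
    intro j _
    have h1 : q * q ^ j ≤ q * 1 := by
      apply mul_le_mul_of_nonneg_left _ hq0.le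
      exact pow_le_one₀ hq0.le hq1.le
    nlinarith
  have := Finset.prod_pos hpos
  rw [h] at this
  exact lt_irrefl 0 this

lemma qp_q_norm_ge (k : ℕ) : (1 - q) ^ k ≤ ‖qp (q:ℂ) (q:ℂ) k‖ := by
  rw [qp_q_eq, Complex.norm_real, Real.norm_eq_abs]
  have h1 : ∀ j ∈ Finset.range k, (1 - q) ≤ 1 - q * q ^ j := by
    intro j _
    have : q * q ^ j ≤ q * 1 := mul_le_mul_of_nonneg_left (pow_le_one₀ hq0.le hq1.le) hq0.le
    linarith
  calc (1 - q)^k = ∏ _j ∈ Finset.range k, (1 - q) := by rw [Finset.prod_const, Finset.card_range]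
    _ ≤ ∏ j ∈ Finset.range k, (1 - q * q ^ j) :=
        Finset.prod_le_prod (fun _ _ => by linarith) h1
    _ ≤ |∏ j ∈ Finset.range k, (1 - q * q ^ j)| := le_abs_self _

end

noncomputable def tt (q b w : ℂ) (k : ℕ) : ℂ :=
  qpInf q (b * q ^ k) * (-1) ^ k * q ^ (k * (k - 1) / 2) * w ^ k / qp q q k

lemma phiT_eq (q b w : ℂ) : phiT q b w = ∑' k, tt q b w k := rfl

lemma tri (k : ℕ) : (k+1)*k/2 = k*(k-1)/2 + k := by
  have h1 := Nat.choose_two_right (k+1)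
  have h2 := Nat.choose_two_right k
  have h3 : (k+1).choose 2 = k.choose 1 + k.choose 2 := by
    simpa using Nat.choose_succ_succ k 1
  rw [Nat.choose_one_right] at h3
  simp only [Nat.add_sub_cancel] at h1
  omega

lemma frac5 {a b c e f D u : ℂ} (hu : u ≠ 0)
    (h : a + b + c = e - f * u) :
    a/(D*u) + b/(D*u) + c/(D*u) = e/(D*u) - f/D := by
  have hf : f / D = f * u / (D * u) := (mul_div_mul_right f D hu).symm
  rw [hf, ← add_div, ← add_div, h, sub_div]

section
variable {q : ℝ} (hq0 : 0 < q) (hq1 : q < 1)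
include hq0 hq1

lemma summable_tt (b w : ℂ) : Summable (tt (q:ℂ) b w) := by
  have h1q : (0:ℝ) < 1 - q := by linarith
  set M := Real.exp (‖b‖ / (1 - q)) with hM
  set r := ‖w‖ / (1 - q) with hr
  have hrnn : 0 ≤ r := by positivity
  have hbound : Summable (fun k : ℕ => M * (q ^ (k*(k-1)/2) * r ^ k)) := by
    apply Summable.mul_left
    apply summable_of_ratio_norm_eventually_le (r := 1/2) (by norm_num)
    have ht : Tendsto (fun k : ℕ => q ^ k * r) atTop (𝓝 0) := by
      simpa using (tendsto_pow_atTop_nhds_zero_of_lt_one hq0.le hq1).mul_const r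
    filter_upwards [ht.eventually_le_const (by norm_num : (0:ℝ) < 1/2)] with k hk
    have hk' : (k+1)*((k+1)-1)/2 = k*(k-1)/2 + k := by simpa using tri k
    rw [Real.norm_of_nonneg (by positivity), Real.norm_of_nonneg (by positivity), hk']
    calc q^(k*(k-1)/2 + k) * r^(k+1) = (q^k * r) * (q^(k*(k-1)/2) * r^k) := by ring
      _ ≤ 1/2 * (q^(k*(k-1)/2) * r^k) := mul_le_mul_of_nonneg_right hk (by positivity)
  apply Summable.of_norm_bounded hbound
  intro k
  have hb : ‖b * (q:ℂ)^k‖ ≤ ‖b‖ := by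
    rw [norm_mul, norm_pow, Complex.norm_real, Real.norm_of_nonneg hq0.le]
    nlinarith [pow_le_one₀ hq0.le hq1.le (n := k), norm_nonneg b, pow_nonneg hq0.le k]
  have h1 : ‖qpInf (q:ℂ) (b*(q:ℂ)^k)‖ ≤ M := by
    refine (qpInf_norm_le hq0 hq1 _).trans (Real.exp_le_exp.mpr ?_)
    gcongr
  have h2 : (1-q)^k ≤ ‖qp (q:ℂ) (q:ℂ) k‖ := qp_q_norm_ge hq0 hq1 k
  have h2' : (0:ℝ) < ‖qp (q:ℂ) (q:ℂ) k‖ := lt_of_lt_of_le (by positivity) h2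
  calc ‖tt (q:ℂ) b w k‖
      = ‖qpInf (q:ℂ) (b*(q:ℂ)^k)‖ * 1 * q ^ (k*(k-1)/2) * ‖w‖^k / ‖qp (q:ℂ) (q:ℂ) k‖ := by
        simp only [tt, norm_div, norm_mul, norm_pow, norm_neg, norm_one, one_pow,
          Complex.norm_real, Real.norm_of_nonneg hq0.le]
    _ ≤ M * 1 * q ^ (k*(k-1)/2) * ‖w‖^k / (1-q)^k := by
        gcongr
    _ = M * (q ^ (k*(k-1)/2) * r ^ k) := by
        rw [hr, div_pow]
        field_simp

omit hq0 hq1 in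
lemma tsum_telescope {A G : ℕ → ℂ} (hA : Summable A) (h0 : G 0 = A 0)
    (hs : ∀ k, G (k+1) = A (k+1) - A k) : ∑' k, G k = 0 := by
  have hA1 : Summable (fun k => A (k+1)) := (summable_nat_add_iff 1).2 hA
  have hG1 : Summable (fun k => G (k+1)) := by
    simp only [hs]; exact hA1.sub hA
  have hG : Summable G := (summable_nat_add_iff 1).1 hG1
  rw [Summable.tsum_eq_zero_add hG, tsum_congr hs, Summable.tsum_sub hA1 hA, h0]
  have := Summable.tsum_eq_zero_add hA
  rw [this]
  ring

lemma key_comb (b1 b2 b3 w1 w2 w3 c1 c2 c3 cA bA wA : ℂ)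
    (h0 : c1 * tt (q:ℂ) b1 w1 0 + c2 * tt (q:ℂ) b2 w2 0 + c3 * tt (q:ℂ) b3 w3 0
        = cA * tt (q:ℂ) bA wA 0)
    (hs : ∀ k, c1 * tt (q:ℂ) b1 w1 (k+1) + c2 * tt (q:ℂ) b2 w2 (k+1)
        + c3 * tt (q:ℂ) b3 w3 (k+1)
        = cA * tt (q:ℂ) bA wA (k+1) - cA * tt (q:ℂ) bA wA k) :
    c1 * phiT (q:ℂ) b1 w1 + c2 * phiT (q:ℂ) b2 w2 + c3 * phiT (q:ℂ) b3 w3 = 0 := by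
  have s1 := (summable_tt hq0 hq1 b1 w1).mul_left c1
  have s2 := (summable_tt hq0 hq1 b2 w2).mul_left c2
  have s3 := (summable_tt hq0 hq1 b3 w3).mul_left c3
  rw [phiT_eq, phiT_eq, phiT_eq, ← tsum_mul_left, ← tsum_mul_left, ← tsum_mul_left,
    ← Summable.tsum_add s1 s2, ← Summable.tsum_add (s1.add s2) s3]
  exact tsum_telescope ((summable_tt hq0 hq1 bA wA).mul_left cA) h0
    (fun k => by rw [← hs k])

end

lemma qp_succ (q a : ℂ) (n : ℕ) : qp q a (n+1) = qp q a n * (1 - a*q^n) :=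
  Finset.prod_range_succ _ n

lemma tt_succ (q b w : ℂ) (k : ℕ) : tt q b w (k+1)
    = qpInf q (b*q^(k+1)) * (-1)^(k+1) * (q^(k*(k-1)/2) * q^k) * w^(k+1)
      / (qp q q k * (1 - q*q^k)) := by
  have e : (k+1)*((k+1)-1)/2 = k*(k-1)/2 + k := by simpa using tri k
  rw [tt, e, qp_succ]
  ring

section
variable {q : ℝ} (hq0 : 0 < q) (hq1 : q < 1)
include hq0 hq1

lemma one_sub_q_pow_ne (k : ℕ) : (1:ℂ) - (q:ℂ)*(q:ℂ)^k ≠ 0 := by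
  have h : ((1 - q*q^k : ℝ) : ℂ) = 1 - (q:ℂ)*(q:ℂ)^k := by push_cast; ring
  rw [← h, Complex.ofReal_ne_zero]
  have : q * q ^ k ≤ q * 1 := mul_le_mul_of_nonneg_left (pow_le_one₀ hq0.le hq1.le) hq0.le
  nlinarith

lemma gpart (α z Q : ℂ) (hz : z ≠ 0) :
    z * phiT (q:ℂ) (α*z*Q*q*q) (q*z^2)
      + (α*Q - z - z⁻¹) * phiT (q:ℂ) (α*z*Q*q) (q*z^2)
      + z⁻¹ * phiT (q:ℂ) (α*z*Q) (q*z^2) = 0 := by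
  have hqc : (q:ℂ) ≠ 0 := by
    simpa using (show (q:ℝ) ≠ 0 from ne_of_gt hq0)
  apply key_comb hq0 hq1 _ _ _ _ _ _ _ _ _ (α*Q*z^2*q) (α*z*Q*q*q) (q*z^2*q)
  · -- h0
    norm_num [tt, qp]
    rw [qpInf_peel hq0 hq1 (α*z*Q), qpInf_peel hq0 hq1 (α*z*Q*q)]
    field_simp
    ring
  · -- hs
    intro k
    simp only [tt_succ]
    simp only [tt]
    rw [show (α*z*Q*(q:ℂ)*(q:ℂ))*(q:ℂ)^(k+1) = α*z*Q*(q:ℂ)^(k+3) by ring,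
      show (α*z*Q*(q:ℂ))*(q:ℂ)^(k+1) = α*z*Q*(q:ℂ)^(k+2) by ring,
      show (α*z*Q)*(q:ℂ)^(k+1) = α*z*Q*(q:ℂ)^(k+1) by ring,
      show (α*z*Q*(q:ℂ)*(q:ℂ))*(q:ℂ)^k = α*z*Q*(q:ℂ)^(k+2) by ring]
    have p2 : qpInf (q:ℂ) (α*z*Q*(q:ℂ)^(k+1))
        = (1 - α*z*Q*(q:ℂ)^(k+1)) * qpInf (q:ℂ) (α*z*Q*(q:ℂ)^(k+2)) := by
      have := qpInf_shift hq0 hq1 (α*z*Q) (k+1)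
      rwa [show k+1+1 = k+2 by omega] at this
    have p1 : qpInf (q:ℂ) (α*z*Q*(q:ℂ)^(k+2))
        = (1 - α*z*Q*(q:ℂ)^(k+2)) * qpInf (q:ℂ) (α*z*Q*(q:ℂ)^(k+3)) := by
      have := qpInf_shift hq0 hq1 (α*z*Q) (k+2)
      rwa [show k+2+1 = k+3 by omega] at this
    rw [p2, p1]
    have hqp := qp_q_ne hq0 hq1 k
    have hone := one_sub_q_pow_ne hq0 hq1 k
    generalize hu : (1:ℂ) - (q:ℂ)*(q:ℂ)^k = u at hone ⊢
    field_simp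
    rw [← hu]
    ring

end

section
variable {q : ℝ} (hq0 : 0 < q) (hq1 : q < 1)
include hq0 hq1

set_option maxHeartbeats 1000000 in
lemma fpart (z d : ℂ) (hz : z ≠ 0) (hd : d ≠ 0) :
    (-(z⁻¹*d⁻¹)) * phiT (q:ℂ) d (z^2*d)
      + (z⁻¹*d⁻¹ - z - z⁻¹) * phiT (q:ℂ) (d*q) (z^2*(d*q))
      + (-(z*(d*q))) * phiT (q:ℂ) (d*q*q) (z^2*(d*q*q)) = 0 := by
  have hqc : (q:ℂ) ≠ 0 := by
    simpa using (show (q:ℝ) ≠ 0 from ne_of_gt hq0)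
  apply key_comb hq0 hq1 _ _ _ _ _ _ _ _ _ (-z) (d*q*q) (z^2*(d*q))
  · -- h0
    norm_num [tt, qp]
    rw [qpInf_peel hq0 hq1 d, qpInf_peel hq0 hq1 (d*(q:ℂ))]
    field_simp
    ring
  · -- hs
    intro k
    simp only [tt_succ]
    simp only [tt]
    rw [show (d*(q:ℂ)*(q:ℂ))*(q:ℂ)^(k+1) = d*(q:ℂ)^(k+3) by ring,
      show (d*(q:ℂ))*(q:ℂ)^(k+1) = d*(q:ℂ)^(k+2) by ring,
      show (d*(q:ℂ)*(q:ℂ))*(q:ℂ)^k = d*(q:ℂ)^(k+2) by ring]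
    have p2 : qpInf (q:ℂ) (d*(q:ℂ)^(k+1))
        = (1 - d*(q:ℂ)^(k+1)) * qpInf (q:ℂ) (d*(q:ℂ)^(k+2)) := by
      have := qpInf_shift hq0 hq1 d (k+1)
      rwa [show k+1+1 = k+2 by omega] at this
    have p1 : qpInf (q:ℂ) (d*(q:ℂ)^(k+2))
        = (1 - d*(q:ℂ)^(k+2)) * qpInf (q:ℂ) (d*(q:ℂ)^(k+3)) := by
      have := qpInf_shift hq0 hq1 d (k+2)
      rwa [show k+2+1 = k+3 by omega] at this
    rw [p2, p1]
    have hqp := qp_q_ne hq0 hq1 k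
    have hone := one_sub_q_pow_ne hq0 hq1 k
    generalize hu : (1:ℂ) - (q:ℂ)*(q:ℂ)^k = u at hone ⊢
    simp only [← mul_div_assoc]
    refine frac5 hone ?_
    apply mul_right_cancel₀ (mul_ne_zero hz hd)
    rw [← hu]
    field_simp
    ring

end

set_option maxHeartbeats 1000000 in
theorem stmt_11 (q : ℝ) (hq0 : 0 < q) (hq1 : q < 1) (α z : ℂ) (hα : α ≠ 0) (hz : z ≠ 0) :
    (∀ n : ℤ, fseq (q : ℂ) α z (n - 1) +
        (α * (q : ℂ) ^ (-n) - z - z⁻¹) * fseq (q : ℂ) α z n + fseq (q : ℂ) α z (n + 1) = 0) ∧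
    (∀ n : ℤ, gseq (q : ℂ) α z (n - 1) +
        (α * (q : ℂ) ^ (-n) - z - z⁻¹) * gseq (q : ℂ) α z n + gseq (q : ℂ) α z (n + 1) = 0) := by
  have hqc : (q:ℂ) ≠ 0 := by
    simpa using (show (q:ℝ) ≠ 0 from ne_of_gt hq0)
  have hm1 : (-1:ℂ) ≠ 0 := by norm_num
  constructor
  · -- f part
    intro n
    have hQn : (q:ℂ)^(n:ℤ) ≠ 0 := zpow_ne_zero n hqc
    have hd : (q:ℂ)^(n:ℤ)/(α*z) ≠ 0 := div_ne_zero hQn (mul_ne_zero hα hz)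
    obtain ⟨m, hm⟩ : ∃ m:ℤ, n*(n+1) = m + m := Int.even_mul_succ_self n
    have e1 : (n-1)*n = n*(n+1) - 2*n := by ring
    have e2 : (n+1)*(n+1+1) = n*(n+1) + 2*(n+1) := by ring
    have he1 : (n-1)*n/2 = n*(n+1)/2 + (-n) := by omega
    have he2 : (n+1)*(n+1+1)/2 = n*(n+1)/2 + (n+1) := by omega
    simp only [fseq]
    rw [show n-1+1 = n by ring]
    have hp1 : (-1:ℂ)^(n-1) * α^(-(n-1)) * (q:ℂ)^((n-1)*n/2)
        = (-1:ℂ)^n * α^(-n) * (q:ℂ)^(n*(n+1)/2) * (-(z⁻¹*((q:ℂ)^(n:ℤ)/(α*z))⁻¹)) := by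
      rw [zpow_sub_one₀ hm1, show -(n-1) = -n+1 by ring, zpow_add_one₀ hα, he1,
        zpow_add₀ hqc, zpow_neg]
      field_simp
      ring_nf
      rw [zpow_neg, inv_mul_cancel₀ hQn]
    have hp3 : (-1:ℂ)^(n+1) * α^(-(n+1)) * (q:ℂ)^((n+1)*(n+1+1)/2)
        = (-1:ℂ)^n * α^(-n) * (q:ℂ)^(n*(n+1)/2)
          * (-(z*((q:ℂ)^(n:ℤ)/(α*z)*(q:ℂ)))) := by
      rw [zpow_add_one₀ hm1, show -(n+1) = -n-1 by ring, zpow_sub_one₀ hα, he2,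
        zpow_add₀ hqc, zpow_add_one₀ hqc]
      field_simp
    rw [hp1, hp3, zpow_add_one₀ hqc (n+1), zpow_add_one₀ hqc n,
      show α * (q:ℂ)^(-n) = z⁻¹*((q:ℂ)^(n:ℤ)/(α*z))⁻¹ by
        rw [zpow_neg]; field_simp; try ring,
      show z*(q:ℂ)^(n:ℤ)/α = z^2*((q:ℂ)^(n:ℤ)/(α*z)) by field_simp; try ring,
      show (q:ℂ)^(n:ℤ)*(q:ℂ)/(α*z) = (q:ℂ)^(n:ℤ)/(α*z)*(q:ℂ) by ring,
      show z*((q:ℂ)^(n:ℤ)*(q:ℂ))/α = z^2*((q:ℂ)^(n:ℤ)/(α*z)*(q:ℂ)) by field_simp; try ring,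
      show (q:ℂ)^(n:ℤ)*(q:ℂ)*(q:ℂ)/(α*z) = (q:ℂ)^(n:ℤ)/(α*z)*(q:ℂ)*(q:ℂ) by ring,
      show z*((q:ℂ)^(n:ℤ)*(q:ℂ)*(q:ℂ))/α = z^2*((q:ℂ)^(n:ℤ)/(α*z)*(q:ℂ)*(q:ℂ)) by
        field_simp]
    have hf := fpart hq0 hq1 z ((q:ℂ)^(n:ℤ)/(α*z)) hz hd
    linear_combination ((-1:ℂ)^n * α^(-n) * (q:ℂ)^(n*(n+1)/2)) * hf
  · -- g part
    intro n
    simp only [gseq]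
    rw [show -(n-1) = -n+1 by ring, show -(n+1) = -n-1 by ring,
      zpow_add_one₀ hz, zpow_sub_one₀ hz,
      show (1:ℤ)-(n-1) = -n+1+1 by ring, show (1:ℤ)-(n+1) = -n by ring,
      show (1:ℤ)-n = -n+1 by ring,
      zpow_add_one₀ hqc (-n+1), zpow_add_one₀ hqc (-n),
      show α*z*((q:ℂ)^(-n)*(q:ℂ)*(q:ℂ)) = α*z*(q:ℂ)^(-n)*(q:ℂ)*(q:ℂ) by ring,
      show α*z*((q:ℂ)^(-n)*(q:ℂ)) = α*z*(q:ℂ)^(-n)*(q:ℂ) by ring]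
    have hG := gpart hq0 hq1 α z ((q:ℂ)^(-n)) hz
    linear_combination (z:ℂ)^(-n) * hG
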